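/- For every non-negative integer k, the tree T(k) obtained by subdividing k edges of a star of order k+2 once has independence number k+1 and has exactly 2^k + 1 maximum independent sets. -/

import Mathlib

/-- `S` is an independent set of `G`: pairwise non-adjacent vertices. -/
def IndepSetOf {V : Type*} (G : SimpleGraph V) (S : Set V) : Prop :=
  S.Pairwise fun a b => ¬ G.Adj a b

/-- The independence number of `G`: the maximum cardinality of an independent set. -/
noncomputable def indepN {V : Type*} (G : SimpleGraph V) : ℕ :=
  sSup {n | ∃ S : Set V, IndepSetOf G S ∧ S.ncard = n}

/-- `S` is a maximum independent set of `G`. -/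
def MaxIndepSet {V : Type*} (G : SimpleGraph V) (S : Set V) : Prop :=
  IndepSetOf G S ∧ S.ncard = indepN G

/-- The number of maximum independent sets of `G`. -/
noncomputable def numMaxIndepSets {V : Type*} (G : SimpleGraph V) : ℕ :=
  {S : Set V | MaxIndepSet G S}.ncard

/-- `TkGraph k` is the tree `T(k)` obtained from a star with center `c` of order `k+2`
(center plus `k+1` leaves) by subdividing `k` of its edges once.
Vertices: the center `Sum.inl ()`, one pendant leaf `Sum.inr (Sum.inl ())`,
the subdivision vertices `v i = Sum.inr (Sum.inr (Sum.inl i))`, and the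
endvertices `u i = Sum.inr (Sum.inr (Sum.inr i))`. -/
def TkGraph (k : ℕ) : SimpleGraph (Unit ⊕ Unit ⊕ Fin k ⊕ Fin k) :=
  SimpleGraph.fromRel fun a b =>
    (a = Sum.inl () ∧ b = Sum.inr (Sum.inl ())) ∨
    (∃ i : Fin k, a = Sum.inl () ∧ b = Sum.inr (Sum.inr (Sum.inl i))) ∨
    (∃ i : Fin k, a = Sum.inr (Sum.inr (Sum.inl i)) ∧ b = Sum.inr (Sum.inr (Sum.inr i)))

namespace TkAux

variable {k : ℕ}

abbrev Vk (k : ℕ) := Unit ⊕ Unit ⊕ Fin k ⊕ Fin k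

def cC : Vk k := Sum.inl ()
def lL : Vk k := Sum.inr (Sum.inl ())
def vV (i : Fin k) : Vk k := Sum.inr (Sum.inr (Sum.inl i))
def uU (i : Fin k) : Vk k := Sum.inr (Sum.inr (Sum.inr i))

def cls : Vk k → Option (Fin k)
  | Sum.inl _ => none
  | Sum.inr (Sum.inl _) => none
  | Sum.inr (Sum.inr (Sum.inl i)) => some i
  | Sum.inr (Sum.inr (Sum.inr i)) => some i

lemma cls_none (x : Vk k) (h : cls x = none) : x = cC ∨ x = lL := by
  rcases x with _ | _ | i | i <;> simp_all [cls, cC, lL]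

lemma cls_some (x : Vk k) (i : Fin k) (h : cls x = some i) : x = vV i ∨ x = uU i := by
  rcases x with _ | _ | j | j <;> simp_all [cls, vV, uU]

lemma pair_adj (x y : Vk k) (hne : x ≠ y) (hc : cls x = cls y) : (TkGraph k).Adj x y := by
  rcases x with _ | _ | i | i <;> rcases y with _ | _ | j | j <;>
    simp_all [cls, TkGraph, SimpleGraph.fromRel_adj]

lemma adj_cl : (TkGraph k).Adj cC lL := by
  simp [TkGraph, SimpleGraph.fromRel_adj, cC, lL]
lemma adj_cv (i : Fin k) : (TkGraph k).Adj cC (vV i) := by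
  simp [TkGraph, SimpleGraph.fromRel_adj, cC, vV]
lemma adj_vu (i : Fin k) : (TkGraph k).Adj (vV i) (uU i) := by
  simp [TkGraph, SimpleGraph.fromRel_adj, vV, uU]

-- non-adjacency lemmas
lemma nadj_cu (i : Fin k) : ¬ (TkGraph k).Adj cC (uU i) := by
  simp [TkGraph, SimpleGraph.fromRel_adj, cC, uU]
lemma nadj_uu (i j : Fin k) : ¬ (TkGraph k).Adj (uU i) (uU j) := by
  simp [TkGraph, SimpleGraph.fromRel_adj, uU]
lemma nadj_lu (i : Fin k) : ¬ (TkGraph k).Adj lL (uU i) := by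
  simp [TkGraph, SimpleGraph.fromRel_adj, lL, uU]
lemma nadj_lv (i : Fin k) : ¬ (TkGraph k).Adj lL (vV i) := by
  simp [TkGraph, SimpleGraph.fromRel_adj, lL, vV]
lemma nadj_vv (i j : Fin k) : ¬ (TkGraph k).Adj (vV i) (vV j) := by
  simp [TkGraph, SimpleGraph.fromRel_adj, vV]
lemma nadj_vu' (i j : Fin k) (h : i ≠ j) : ¬ (TkGraph k).Adj (vV i) (uU j) := by
  simp [TkGraph, SimpleGraph.fromRel_adj, vV, uU]
  exact fun h2 => h h2.symm

lemma ncard_range' {α β : Type*} (f : α → β) (hf : Function.Injective f) :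
    (Set.range f).ncard = Nat.card α := by
  rw [← Nat.card_coe_set_eq, Nat.card_range_of_injective hf]

lemma uU_inj : Function.Injective (uU (k := k)) := by
  intro a b h; simpa [uU] using h

/-- The max independent set containing the center. -/
def A : Set (Vk k) := insert cC (Set.range uU)

/-- The max independent sets containing the leaf. -/
def B (f : Fin k → Bool) : Set (Vk k) :=
  insert lL (Set.range fun i => if f i then vV i else uU i)

lemma indep_A : IndepSetOf (TkGraph k) (A (k := k)) := by
  intro x hx y hy hne hadj
  rcases hx with rfl | ⟨i, rfl⟩ <;> rcases hy with rfl | ⟨j, rfl⟩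
  · exact hne rfl
  · exact nadj_cu j hadj
  · exact nadj_cu i (hadj.symm)
  · exact nadj_uu i j hadj

lemma indep_B (f : Fin k → Bool) : IndepSetOf (TkGraph k) (B f) := by
  intro x hx y hy hne hadj
  rcases hx with rfl | ⟨i, rfl⟩ <;> rcases hy with rfl | ⟨j, rfl⟩
  · exact hne rfl
  · by_cases hj : f j <;> simp only [hj, if_true, if_false] at hadj
    · exact nadj_lv j hadj
    · exact nadj_lu j hadj
  · by_cases hi : f i <;> simp only [hi, if_true, if_false] at hadj
    · exact nadj_lv i (hadj.symm)
    · exact nadj_lu i (hadj.symm)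
  · have hij : i ≠ j := by rintro rfl; exact hne rfl
    by_cases hi : f i <;> by_cases hj : f j <;>
      simp only [hi, hj, if_true, if_false] at hadj
    · exact nadj_vv i j hadj
    · exact nadj_vu' i j hij hadj
    · exact nadj_vu' j i hij.symm (hadj.symm)
    · exact nadj_uu i j hadj

lemma Bfun_inj (f : Fin k → Bool) : Function.Injective fun i => if f i then vV i else uU i := by
  intro a b h
  by_cases ha : f a <;> by_cases hb : f b <;>
    simp only [ha, hb, if_true, if_false, vV, uU] at h <;> simp_all

lemma lL_not_mem_rangeB (f : Fin k → Bool) :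
    lL ∉ Set.range fun i => if f i then vV i else uU i := by
  rintro ⟨i, hi⟩
  by_cases h : f i <;> simp [h, lL, vV, uU] at hi

lemma ncard_A : (A (k := k)).ncard = k + 1 := by
  rw [A, Set.ncard_insert_of_notMem, ncard_range' _ uU_inj]
  · simp
  · rintro ⟨i, hi⟩; simp [cC, uU] at hi

lemma ncard_B (f : Fin k → Bool) : (B f).ncard = k + 1 := by
  rw [B, Set.ncard_insert_of_notMem (lL_not_mem_rangeB f),
    ncard_range' _ (Bfun_inj f)]
  simp

lemma card_le (S : Set (Vk k)) (hS : IndepSetOf (TkGraph k) S) : S.ncard ≤ k + 1 := by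
  have hinj : Set.InjOn cls S := by
    intro x hx y hy hxy
    by_contra hne
    exact hS hx hy hne (pair_adj x y hne hxy)
  calc S.ncard = (cls '' S).ncard := (Set.ncard_image_of_injOn hinj).symm
    _ ≤ (Set.univ : Set (Option (Fin k))).ncard :=
        Set.ncard_le_ncard (Set.subset_univ _) Set.finite_univ
    _ = k + 1 := by simp [Set.ncard_univ]

lemma indepN_eq : indepN (TkGraph k) = k + 1 := by
  have hA : (k + 1) ∈ {n | ∃ S : Set (Vk k), IndepSetOf (TkGraph k) S ∧ S.ncard = n} :=
    ⟨A, indep_A, ncard_A⟩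
  have hb : ∀ n ∈ {n | ∃ S : Set (Vk k), IndepSetOf (TkGraph k) S ∧ S.ncard = n}, n ≤ k + 1 := by
    rintro n ⟨S, hS, rfl⟩; exact card_le S hS
  exact le_antisymm (csSup_le ⟨k + 1, hA⟩ hb) (le_csSup ⟨k + 1, hb⟩ hA)

lemma maxA : MaxIndepSet (TkGraph k) (A (k := k)) := ⟨indep_A, by rw [indepN_eq, ncard_A]⟩
lemma maxB (f : Fin k → Bool) : MaxIndepSet (TkGraph k) (B f) :=
  ⟨indep_B f, by rw [indepN_eq, ncard_B]⟩

open Classical in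
lemma max_char (S : Set (Vk k)) (hS : MaxIndepSet (TkGraph k) S) :
    S = A ∨ ∃ f : Fin k → Bool, S = B f := by
  obtain ⟨hind, hcard⟩ := hS
  rw [indepN_eq] at hcard
  have hinj : Set.InjOn cls S := by
    intro x hx y hy hxy
    by_contra hne
    exact hind hx hy hne (pair_adj x y hne hxy)
  -- surjectivity of cls on S
  have hsurj : ∀ o : Option (Fin k), ∃ x ∈ S, cls x = o := by
    have h1 : (cls '' S).ncard = k + 1 := by
      rw [Set.ncard_image_of_injOn hinj, hcard]
    have h2 : cls '' S = Set.univ := by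
      apply Set.eq_of_subset_of_ncard_le (Set.subset_univ _) _ Set.finite_univ
      rw [h1]; simp [Set.ncard_univ]
    intro o
    have : o ∈ cls '' S := h2 ▸ Set.mem_univ o
    obtain ⟨x, hx, hxo⟩ := this
    exact ⟨x, hx, hxo⟩
  by_cases hc : cC ∈ S
  · left
    -- c ∈ S: S = A
    have hvnot : ∀ i : Fin k, vV i ∉ S := fun i hv =>
      hind hc hv (by simp [cC, vV]) (adj_cv i)
    have hlnot : lL ∉ S := fun hl => hind hc hl (by simp [cC, lL]) adj_cl
    apply Set.eq_of_subset_of_ncard_le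
    · intro x hx
      rcases ho : cls x with _ | i
      · rcases cls_none x ho with rfl | rfl
        · exact Set.mem_insert _ _
        · exact absurd hx hlnot
      · rcases cls_some x i ho with rfl | rfl
        · exact absurd hx (hvnot i)
        · exact Set.mem_insert_of_mem _ ⟨i, rfl⟩
    · rw [ncard_A, hcard]
    · exact Set.toFinite _
  · right
    have hlS : lL ∈ S := by
      obtain ⟨x, hx, hxo⟩ := hsurj none
      rcases cls_none x hxo with rfl | rfl
      · exact absurd hx hc
      · exact hx
    refine ⟨fun i => decide (vV i ∈ S), ?_⟩
    apply Set.eq_of_subset_of_ncard_le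
    · intro x hx
      rcases ho : cls x with _ | i
      · rcases cls_none x ho with rfl | rfl
        · exact absurd hx hc
        · exact Set.mem_insert _ _
      · rcases cls_some x i ho with rfl | rfl
        · refine Set.mem_insert_of_mem _ ⟨i, ?_⟩
          simp [hx]
        · have hvnot : vV i ∉ S := fun hv =>
            hind hv hx (by simp [vV, uU]) (adj_vu i)
          refine Set.mem_insert_of_mem _ ⟨i, ?_⟩
          simp [hvnot]
    · rw [ncard_B, hcard]
    · exact Set.toFinite _

open Classical in
lemma setOfMax : {S : Set (Vk k) | MaxIndepSet (TkGraph k) S} = insert A (Set.range B) := by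
  ext S
  simp only [Set.mem_setOf_eq, Set.mem_insert_iff, Set.mem_range]
  constructor
  · intro h
    rcases max_char S h with h1 | ⟨f, hf⟩
    · exact Or.inl h1
    · exact Or.inr ⟨f, hf.symm⟩
  · rintro (rfl | ⟨f, rfl⟩)
    · exact maxA
    · exact maxB f

lemma cC_not_mem_B (f : Fin k → Bool) : cC ∉ B f := by
  rintro (h | ⟨i, hi⟩)
  · simp [cC, lL] at h
  · by_cases h : f i <;> simp [h, cC, vV, uU] at hi

lemma B_inj : Function.Injective (B (k := k)) := by
  intro f g h
  funext i
  have hv : vV i ∈ B f ↔ vV i ∈ B g := by rw [h]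
  by_cases hf : f i <;> by_cases hg : g i <;> [skip; skip; skip; skip]
  · rw [hf, hg]
  · exfalso
    have : vV i ∈ B f := Set.mem_insert_of_mem _ ⟨i, by simp [hf]⟩
    rw [h] at this
    rcases this with h1 | ⟨j, hj⟩
    · simp [vV, lL] at h1
    · by_cases hgj : g j <;> simp [hgj, vV, uU] at hj
      · subst hj; exact hg hgj
  · exfalso
    have : vV i ∈ B g := Set.mem_insert_of_mem _ ⟨i, by simp [hg]⟩
    rw [← h] at this
    rcases this with h1 | ⟨j, hj⟩
    · simp [vV, lL] at h1
    · by_cases hfj : f j <;> simp [hfj, vV, uU] at hj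
      · subst hj; exact hf hfj
  · rw [Bool.not_eq_true] at hf hg; rw [hf, hg]

lemma A_not_mem_rangeB : (A (k := k)) ∉ Set.range B := by
  rintro ⟨f, hf⟩
  exact cC_not_mem_B f (hf ▸ Set.mem_insert _ _)

theorem numMax : numMaxIndepSets (TkGraph k) = 2 ^ k + 1 := by
  rw [numMaxIndepSets, setOfMax,
    Set.ncard_insert_of_notMem A_not_mem_rangeB (Set.toFinite _),
    ncard_range' _ B_inj]
  simp [Nat.card_eq_fintype_card]

end TkAux

/-- `T(k)` has independence number `k+1` and exactly `2^k + 1`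
maximum independent sets. -/
theorem TkGraph_indepN_and_numMaxIndepSets (k : ℕ) :
    indepN (TkGraph k) = k + 1 ∧ numMaxIndepSets (TkGraph k) = 2 ^ k + 1 :=
  ⟨TkAux.indepN_eq, TkAux.numMax⟩
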